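/- Let P ⊆ ℝ^X be a polytope, c ∈ ℝ^X, and let F* be the face of maximizers of μ ↦ cᵀμ over P. Suppose F* ≠ P. Let ‖·‖ be a semi-norm on ℝ^X and define Δ = min{(cᵀμ* - cᵀμ)/‖μ* - μ‖ : μ* a vertex of F*, μ a neighboring vertex of μ* not in F*} (with c/0 := +∞). Then Δ > 0 and for every μ ∈ P, cᵀμ* - cᵀμ ≥ Δ · inf_{μ*∈F*} ‖μ* - μ‖ where μ* ∈ F* on the left is any maximizer. -/

import Mathlib

open Finset

/-- The linear objective `μ ↦ cᵀμ`. -/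
def linVal {X : Type*} [Fintype X] (c μ : X → ℝ) : ℝ := ∑ x, c x * μ x

set_option linter.unusedSectionVars false

section Aux

variable {X : Type*} [Fintype X]

/-- The objective as a continuous linear map. -/
noncomputable def linCLM (c : X → ℝ) : (X → ℝ) →L[ℝ] ℝ :=
  ∑ x, c x • (ContinuousLinearMap.proj x)

lemma linCLM_apply (c μ : X → ℝ) : linCLM c μ = linVal c μ := by
  simp [linCLM, linVal, ContinuousLinearMap.sum_apply, smul_eq_mul]

/-- Finitely generated convex cone (as a set). -/
def ccone (D : Finset (X → ℝ)) : Set (X → ℝ) :=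
  {x | ∃ l : (X → ℝ) → ℝ, (∀ d ∈ D, 0 ≤ l d) ∧ x = ∑ d ∈ D, l d • d}

lemma ccone_zero_mem (D : Finset (X → ℝ)) : (0 : X → ℝ) ∈ ccone D :=
  ⟨fun _ => 0, fun _ _ => le_rfl, by simp⟩

lemma ccone_self_mem {D : Finset (X → ℝ)} {d : X → ℝ} (hd : d ∈ D) : d ∈ ccone D := by
  classical
  refine ⟨fun v => if v = d then 1 else 0, fun v _ => by positivity, ?_⟩
  rw [Finset.sum_eq_single_of_mem d hd]
  · simp
  · intro b _ hb; simp [hb]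

lemma ccone_add_mem {D : Finset (X → ℝ)} {x y : X → ℝ} (hx : x ∈ ccone D) (hy : y ∈ ccone D) :
    x + y ∈ ccone D := by
  obtain ⟨l, hl, rfl⟩ := hx
  obtain ⟨m, hm, rfl⟩ := hy
  refine ⟨fun v => l v + m v, fun v hv => add_nonneg (hl v hv) (hm v hv), ?_⟩
  rw [← Finset.sum_add_distrib]
  exact Finset.sum_congr rfl fun v _ => (add_smul _ _ _).symm

lemma ccone_smul_mem {D : Finset (X → ℝ)} {x : X → ℝ} {a : ℝ} (ha : 0 ≤ a) (hx : x ∈ ccone D) :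
    a • x ∈ ccone D := by
  obtain ⟨l, hl, rfl⟩ := hx
  refine ⟨fun v => a * l v, fun v hv => mul_nonneg ha (hl v hv), ?_⟩
  rw [Finset.smul_sum]
  exact Finset.sum_congr rfl fun v _ => (smul_smul _ _ _)

lemma ccone_mono {D D' : Finset (X → ℝ)} (h : D ⊆ D') : ccone D ⊆ ccone D' := by
  classical
  rintro x ⟨l, hl, rfl⟩
  refine ⟨fun v => if v ∈ D then l v else 0, fun v _ => ?_, ?_⟩
  · dsimp only; split
    · exact hl v ‹_›
    · exact le_rfl
  · rw [show (∑ d ∈ D, l d • d) = ∑ d ∈ D, (if d ∈ D then l d else 0) • d from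
      Finset.sum_congr rfl fun v hv => by simp [hv]]
    exact Finset.sum_subset h (fun v _ hv => by simp [hv])

lemma ccone_indexed_mem {D : Finset (X → ℝ)} {ι : Type*} (t : Finset ι) (w : ι → ℝ)
    (h : ι → (X → ℝ)) (hw : ∀ i ∈ t, 0 ≤ w i) (hh : ∀ i ∈ t, h i ∈ D) :
    (∑ i ∈ t, w i • h i) ∈ ccone D := by
  classical
  induction t using Finset.induction_on with
  | empty => simpa using ccone_zero_mem D
  | insert _ _ hnotmem ih =>
    rw [Finset.sum_insert hnotmem]
    exact ccone_add_mem
      (ccone_smul_mem (hw _ (Finset.mem_insert_self _ _))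
        (ccone_self_mem (hh _ (Finset.mem_insert_self _ _))))
      (ih (fun i hi => hw i (Finset.mem_insert_of_mem hi))
        (fun i hi => hh i (Finset.mem_insert_of_mem hi)))

lemma ccone_subset_of_forall {D T : Finset (X → ℝ)} (h : ∀ g ∈ D, g ∈ ccone T) :
    ccone D ⊆ ccone T := by
  rintro x ⟨l, hl, rfl⟩
  have : ∀ g ∈ D, l g • g ∈ ccone T := fun g hg => ccone_smul_mem (hl g hg) (h g hg)
  exact Finset.sum_induction _ _ (fun _ _ => ccone_add_mem) (ccone_zero_mem T) this

lemma ccone_convex (D : Finset (X → ℝ)) : Convex ℝ (ccone D) := by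
  intro x hx y hy a b ha hb _
  exact ccone_add_mem (ccone_smul_mem ha hx) (ccone_smul_mem hb hy)

lemma seminorm_sum_le (N : Seminorm ℝ (X → ℝ)) {ι : Type*} (t : Finset ι) (f : ι → (X → ℝ)) :
    N (∑ i ∈ t, f i) ≤ ∑ i ∈ t, N (f i) := by
  classical
  induction t using Finset.induction_on with
  | empty => simp
  | insert _ _ hnotmem ih =>
    rw [Finset.sum_insert hnotmem, Finset.sum_insert hnotmem]
    exact le_trans (map_add_le_add N _ _) (by linarith)

end Aux

section Geom

variable {X : Type*} [Fintype X]

lemma pointed_at_extreme {P : Set (X → ℝ)} (hPconv : Convex ℝ P)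
    {Ef : Finset (X → ℝ)} (hEfP : (Ef : Set (X → ℝ)) ⊆ P)
    {u : X → ℝ} (hu : u ∈ Set.extremePoints ℝ P)
    {ι : Type*} (t : Finset ι) (w : ι → ℝ) (vv : ι → (X → ℝ))
    (hw : ∀ i ∈ t, 0 ≤ w i) (hvv : ∀ i ∈ t, vv i ∈ Ef.erase u)
    (hsum : ∑ i ∈ t, w i • (vv i - u) = 0) :
    ∀ i ∈ t, w i = 0 := by
  classical
  by_contra hcon
  push_neg at hcon
  obtain ⟨i0, hi0, hwi0⟩ := hcon
  have hwi0' : 0 < w i0 := lt_of_le_of_ne (hw i0 hi0) (Ne.symm hwi0)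
  have hs : 0 < ∑ i ∈ t, w i :=
    lt_of_lt_of_le hwi0' (Finset.single_le_sum hw hi0)
  have hkey : ∑ i ∈ t, w i • vv i = (∑ i ∈ t, w i) • u := by
    have h1 : ∑ i ∈ t, w i • (vv i - u) =
        (∑ i ∈ t, w i • vv i) - (∑ i ∈ t, w i) • u := by
      rw [Finset.sum_smul, ← Finset.sum_sub_distrib]
      exact Finset.sum_congr rfl fun v _ => smul_sub _ _ _
    rw [h1] at hsum
    exact sub_eq_zero.1 hsum
  have hucm : t.centerMass w vv = u := by
    rw [Finset.centerMass, hkey, smul_smul, inv_mul_cancel₀ hs.ne', one_smul]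
  have humem : u ∈ convexHull ℝ ((Ef.erase u : Finset (X → ℝ)) : Set (X → ℝ)) := by
    have h2 := Finset.centerMass_mem_convexHull t hw hs
      (z := vv) (s := ((Ef.erase u : Finset (X → ℝ)) : Set (X → ℝ)))
      (fun i hi => Finset.mem_coe.2 (hvv i hi))
    rwa [hucm] at h2
  have hdiff := (hPconv.mem_extremePoints_iff_mem_diff_convexHull_diff).1 hu
  refine hdiff.2 ?_
  refine convexHull_mono ?_ humem
  intro v hv
  rw [Finset.mem_coe, Finset.mem_erase] at hv
  exact ⟨hEfP hv.2, hv.1⟩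

lemma not_beyond {P : Set (X → ℝ)} {u w : X → ℝ} (hw : w ∈ Set.extremePoints ℝ P)
    (hu : u ∈ P) (hne : w ≠ u) {s : ℝ} (hs : 1 < s) (hx : u + s • (w - u) ∈ P) : False := by
  have hs0 : 0 < s := lt_trans one_pos hs
  have hmem : w ∈ openSegment ℝ u (u + s • (w - u)) := by
    have h1s : 1/s < 1 := by rw [div_lt_one hs0]; exact hs
    refine ⟨1 - 1/s, 1/s, by linarith, by positivity, by ring, ?_⟩
    have : (1/s : ℝ) • (u + s • (w - u)) = (1/s) • u + (w - u) := by
      rw [smul_add, smul_smul, one_div, inv_mul_cancel₀ hs0.ne', one_smul]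
    rw [this]
    module
  have := hw.2 hu hx hmem
  exact hne this.symm

lemma clm_le_on_convexHull {f : (X → ℝ) →L[ℝ] ℝ} {T : Finset (X → ℝ)} {a : ℝ}
    (hT : ∀ v ∈ T, f v ≤ a) {p : X → ℝ}
    (hp : p ∈ convexHull ℝ (T : Set (X → ℝ))) : f p ≤ a := by
  rw [Finset.mem_convexHull] at hp
  obtain ⟨w, hw0, hw1, hcm⟩ := hp
  rw [Finset.centerMass_eq_of_sum_1 _ id hw1] at hcm
  have : f p = ∑ v ∈ T, w v * f v := by
    rw [← hcm, map_sum]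
    exact Finset.sum_congr rfl fun v _ => by simp [map_smul]
  rw [this]
  calc ∑ v ∈ T, w v * f v ≤ ∑ v ∈ T, w v * a :=
        Finset.sum_le_sum fun v hv => mul_le_mul_of_nonneg_left (hT v hv) (hw0 v hv)
    _ = a := by rw [← Finset.sum_mul, hw1, one_mul]

end Geom

section TC

variable {X : Type*} [Fintype X]

lemma tangentCone (Ef : Finset (X → ℝ)) (P : Set (X → ℝ))
    (hPE : P = convexHull ℝ (Ef : Set (X → ℝ)))
    (hEx : ∀ v ∈ Ef, v ∈ Set.extremePoints ℝ P) (u : X → ℝ)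
    (hu : u ∈ Set.extremePoints ℝ P) :
    ∃ G : Finset (X → ℝ),
      (∀ g ∈ G, ∃ w ∈ Ef, w ≠ u ∧ g = w - u ∧ IsExposed ℝ P (segment ℝ u w)) ∧
      ∀ x ∈ P, x - u ∈ ccone G := by
  classical
  have hPconv : Convex ℝ P := hPE ▸ convex_convexHull ℝ _
  have hEfP : (Ef : Set (X → ℝ)) ⊆ P := hPE ▸ subset_convexHull ℝ _
  set gens : Finset (X → ℝ) := (Ef.erase u).image (fun v => v - u) with hgens
  -- base decomposition into all generators
  have hbase : ∀ x ∈ P, x - u ∈ ccone gens := by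
    intro x hx
    rw [hPE, Finset.mem_convexHull] at hx
    obtain ⟨w, hw0, hw1, hcm⟩ := hx
    rw [Finset.centerMass_eq_of_sum_1 _ id hw1] at hcm
    simp only [id] at hcm
    have hxu : x - u = ∑ v ∈ Ef.erase u, w v • (v - u) := by
      rw [Finset.sum_erase _ (by simp)]
      have h2 : ∑ v ∈ Ef, w v • (v - u) =
          (∑ v ∈ Ef, w v • v) - (∑ v ∈ Ef, w v) • u := by
        rw [Finset.sum_smul, ← Finset.sum_sub_distrib]
        exact Finset.sum_congr rfl fun v _ => smul_sub _ _ _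
      rw [h2, hw1, hcm, one_smul]
    rw [hxu]
    exact ccone_indexed_mem _ _ _ (fun v hv => hw0 v (Finset.mem_of_mem_erase hv))
      (fun v hv => Finset.mem_image_of_mem _ hv)
  -- minimal generating subset
  obtain ⟨G, hGmemT, hGmin⟩ := Finset.exists_min_image
    (gens.powerset.filter fun G => ccone G = ccone gens) Finset.card
    ⟨gens, by simp⟩
  rw [Finset.mem_filter, Finset.mem_powerset] at hGmemT
  obtain ⟨hGsub, hGeq⟩ := hGmemT
  have hirred : ∀ g ∈ G, g ∉ ccone (G.erase g) := by
    intro g hg hmem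
    have heq : ccone (G.erase g) = ccone gens := by
      refine Set.Subset.antisymm
        (ccone_mono ((Finset.erase_subset _ _).trans hGsub)) ?_
      rw [← hGeq]
      refine ccone_subset_of_forall fun h hh => ?_
      rcases eq_or_ne h g with rfl | hne
      · exact hmem
      · exact ccone_self_mem (Finset.mem_erase.2 ⟨hne, hh⟩)
    have hle : G.card ≤ (G.erase g).card := hGmin _ (Finset.mem_filter.2
      ⟨Finset.mem_powerset.2 ((Finset.erase_subset _ _).trans hGsub), heq⟩)
    have hlt : (G.erase g).card < G.card := Finset.card_erase_lt_of_mem hg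
    omega
  refine ⟨G, ?_, fun x hx => by rw [hGeq]; exact hbase x hx⟩
  intro g hg
  obtain ⟨vg, hvgE, hvg⟩ := Finset.mem_image.1 (hGsub hg)
  have hvgEf : vg ∈ Ef := Finset.mem_of_mem_erase hvgE
  have hvgne : vg ≠ u := Finset.ne_of_mem_erase hvgE
  have hvgP : vg ∈ P := hEfP hvgEf
  have huP : u ∈ P := hu.1
  have hgne : g ≠ 0 := by rw [← hvg]; exact sub_ne_zero.2 hvgne
  obtain ⟨x0, hx0⟩ : ∃ x0, g x0 ≠ 0 := by
    by_contra hcc; push_neg at hcc; exact hgne (funext hcc)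
  set ψ : (X → ℝ) →L[ℝ] ℝ := (g x0)⁻¹ • ContinuousLinearMap.proj x0 with hψdef
  have hψg : ψ g = 1 := by
    simp [hψdef, ContinuousLinearMap.proj_apply, inv_mul_cancel₀ hx0]
  set prj : (X → ℝ) →L[ℝ] (X → ℝ) :=
    ContinuousLinearMap.id ℝ (X → ℝ) - ψ.smulRight g with hprjdef
  have hprj_apply : ∀ y, prj y = y - ψ y • g := fun y => rfl
  have hprjg : prj g = 0 := by rw [hprj_apply, hψg, one_smul, sub_self]
  have hπker : ∀ y, prj y = 0 → y = ψ y • g := by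
    intro y hy
    rw [hprj_apply] at hy
    exact sub_eq_zero.1 hy
  set Q : Set (X → ℝ) := convexHull ℝ (prj '' ((G.erase g : Finset (X → ℝ)) : Set (X → ℝ)))
    with hQdef
  have hQclosed : IsClosed Q := ((G.erase g).finite_toSet.image prj).isClosed_convexHull (𝕜 := ℝ)
  have hQconv : Convex ℝ Q := convex_convexHull _ _
  have h0Q : (0 : X → ℝ) ∉ Q := by
    intro h0
    rw [hQdef, _root_.convexHull_eq, Set.mem_setOf_eq] at h0
    obtain ⟨ι, t, wt, z, hw0, hw1, hz, hcm⟩ := h0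
    rw [Finset.centerMass_eq_of_sum_1 _ _ hw1] at hcm
    have hz' : ∀ i, i ∈ t → ∃ a, a ∈ (G.erase g : Finset (X → ℝ)) ∧ prj a = z i := by
      intro i hi
      obtain ⟨a, ha, hpa⟩ := hz i hi
      exact ⟨a, Finset.mem_coe.1 ha, hpa⟩
    choose! hvec hmem hπvec using hz'
    set zvec := ∑ i ∈ t, wt i • hvec i with hzvecdef
    have hπz : prj zvec = 0 := by
      rw [hzvecdef, map_sum]
      rw [show ∑ i ∈ t, prj (wt i • hvec i) = ∑ i ∈ t, wt i • z i from
        Finset.sum_congr rfl fun i hi => by rw [map_smul, hπvec i hi]]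
      exact hcm
    have hzg : zvec = ψ zvec • g := hπker _ hπz
    set t0 := ψ zvec with ht0def
    -- for each i, hvec i = vv i - u with vv i ∈ Ef.erase u
    have hvv' : ∀ i, i ∈ t → ∃ v, v ∈ Ef.erase u ∧ v - u = hvec i := by
      intro i hi
      obtain ⟨v, hv, hveq⟩ := Finset.mem_image.1 (hGsub (Finset.mem_of_mem_erase (hmem i hi)))
      exact ⟨v, hv, hveq⟩
    choose! vv hvvmem hvveq using hvv'
    by_cases ht0 : 0 < t0
    · refine hirred g hg ?_
      have hgz : t0⁻¹ • zvec = g := by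
        rw [hzg, smul_smul, inv_mul_cancel₀ ht0.ne', one_smul]
      have hmem2 : t0⁻¹ • zvec ∈ ccone (G.erase g) := by
        rw [hzvecdef]
        exact ccone_smul_mem (inv_nonneg.2 ht0.le)
          (ccone_indexed_mem t wt hvec hw0 fun i hi => hmem i hi)
      exact hgz ▸ hmem2
    · push_neg at ht0
      -- nontrivial nonneg combination equal to zero: contradicts pointedness
      set t' : Finset (Option ι) := insert none (t.image some) with ht'def
      set w' : Option ι → ℝ := fun o => o.elim (-t0) wt with hw'def
      set vv' : Option ι → (X → ℝ) := fun o => o.elim vg vv with hvv'def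
      have hnone : (none : Option ι) ∉ t.image some := by simp
      have hsum' : ∑ o ∈ t', w' o • (vv' o - u) = 0 := by
        rw [ht'def, Finset.sum_insert hnone,
          Finset.sum_image (fun a _ b _ h => Option.some_injective ι h)]
        have h1 : ∑ i ∈ t, w' (some i) • (vv' (some i) - u) = zvec := by
          rw [hzvecdef]
          refine Finset.sum_congr rfl fun i hi => ?_
          simp only [hw'def, hvv'def, Option.elim]
          rw [hvveq i hi]
        rw [h1]
        simp only [hw'def, hvv'def, Option.elim]
        rw [hvg, hzg]
        module
      have hall := pointed_at_extreme hPconv hEfP hu t' w' vv'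
        (by
          intro o ho
          rcases o with _ | i
          · simpa [hw'def] using ht0
          · simp only [hw'def, Option.elim]
            rw [ht'def, Finset.mem_insert] at ho
            rcases ho with h | h
            · exact absurd h (by simp)
            · obtain ⟨j, hj, hji⟩ := Finset.mem_image.1 h
              cases Option.some_injective ι hji
              exact hw0 _ hj)
        (by
          intro o ho
          rcases o with _ | i
          · simpa [hvv'def] using hvgE
          · simp only [hvv'def, Option.elim]
            rw [ht'def, Finset.mem_insert] at ho
            rcases ho with h | h
            · exact absurd h (by simp)
            · obtain ⟨j, hj, hji⟩ := Finset.mem_image.1 h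
              cases Option.some_injective ι hji
              exact hvvmem _ hj)
        hsum'
      have hwt0 : ∀ i ∈ t, wt i = 0 := by
        intro i hi
        have := hall (some i) (by
          rw [ht'def, Finset.mem_insert]
          exact Or.inr (Finset.mem_image_of_mem _ hi))
        simpa [hw'def] using this
      rw [Finset.sum_eq_zero hwt0] at hw1
      exact zero_ne_one hw1
  obtain ⟨f, r, hfQ, hfr⟩ := geometric_hahn_banach_closed_point hQconv hQclosed h0Q
  have hr0 : r < 0 := by simpa using hfr
  set F := f.comp prj with hFdef
  have hFg : F g = 0 := by simp [hFdef, hprjg]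
  have hFh : ∀ h ∈ G.erase g, F h < 0 := by
    intro h hh
    have : f (prj h) < r :=
      hfQ _ (subset_convexHull _ _ (Set.mem_image_of_mem _ (Finset.mem_coe.2 hh)))
    calc F h = f (prj h) := rfl
      _ < r := this
      _ < 0 := hr0
  have hFy : ∀ y ∈ P, F (y - u) ≤ 0 := by
    intro y hy
    have hyc : y - u ∈ ccone G := by rw [hGeq]; exact hbase y hy
    obtain ⟨l, hl, hly⟩ := hyc
    rw [hly, map_sum]
    refine Finset.sum_nonpos fun h hh => ?_
    rw [map_smul, smul_eq_mul]
    rcases eq_or_ne h g with rfl | hne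
    · rw [hFg, mul_zero]
    · exact mul_nonpos_of_nonneg_of_nonpos (hl h hh) (hFh h (Finset.mem_erase.2 ⟨hne, hh⟩)).le
  have hFvg : F vg = F u := by
    have : F (vg - u) = 0 := by rw [hvg]; exact hFg
    have h2 : F (vg - u) = F vg - F u := map_sub F vg u
    rw [h2] at this
    linarith
  have hseg : segment ℝ u vg = {x ∈ P | ∀ y ∈ P, F y ≤ F x} := by
    apply Set.Subset.antisymm
    · intro x hxseg
      have hxP : x ∈ P := hPconv.segment_subset huP hvgP hxseg
      rw [segment_eq_image] at hxseg
      obtain ⟨s, _, rfl⟩ := hxseg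
      have hFx : F ((1-s) • u + s • vg) = F u := by
        rw [map_add, map_smul, map_smul, smul_eq_mul, smul_eq_mul, hFvg]
        ring
      refine ⟨hxP, fun y hy => ?_⟩
      have h1 := hFy y hy
      rw [map_sub] at h1
      rw [hFx]
      linarith
    · rintro x ⟨hxP, hxmax⟩
      have h1 : F u ≤ F x := hxmax u huP
      have h2 : F (x - u) ≤ 0 := hFy x hxP
      rw [map_sub] at h2
      have hFxu : F (x - u) = 0 := by rw [map_sub]; linarith
      have hxc : x - u ∈ ccone G := by rw [hGeq]; exact hbase x hxP
      obtain ⟨l, hl, hlx⟩ := hxc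
      have hsum0 : ∑ h ∈ G, l h * F h = 0 := by
        rw [← hFxu, hlx, map_sum]
        exact Finset.sum_congr rfl fun h _ => by rw [map_smul, smul_eq_mul]
      have hterm : ∀ h ∈ G, l h * F h ≤ 0 := by
        intro h hh
        rcases eq_or_ne h g with rfl | hne
        · rw [hFg, mul_zero]
        · exact mul_nonpos_of_nonneg_of_nonpos (hl h hh) (hFh h (Finset.mem_erase.2 ⟨hne, hh⟩)).le
      have hzero : ∀ h ∈ G, h ≠ g → l h = 0 := by
        intro h hh hne
        have hterm0 := (Finset.sum_eq_zero_iff_of_nonpos hterm).1 hsum0 h hh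
        have hFh' := hFh h (Finset.mem_erase.2 ⟨hne, hh⟩)
        rcases mul_eq_zero.1 hterm0 with h' | h'
        · exact h'
        · exact absurd h' hFh'.ne
      have hxu : x - u = l g • g := by
        rw [hlx]
        exact Finset.sum_eq_single_of_mem g hg fun h hh hne => by
          rw [hzero h hh hne, zero_smul]
      by_cases hls : l g ≤ 1
      · rw [segment_eq_image]
        refine ⟨l g, ⟨hl g hg, hls⟩, ?_⟩
        have : x = u + l g • g := by rw [← hxu]; module
        rw [this, ← hvg]
        module
      · exfalso
        push_neg at hls
        refine not_beyond (hEx vg hvgEf) huP hvgne hls ?_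
        have : u + l g • (vg - u) = x := by rw [hvg, ← hxu]; module
        rw [this]
        exact hxP
  exact ⟨vg, hvgEf, hvgne, hvg.symm, fun _ => ⟨F, hseg⟩⟩

end TC

section Closed

variable {X : Type*} [Fintype X]

lemma ccone_isClosed (D : Finset (X → ℝ)) (φ : (X → ℝ) →L[ℝ] ℝ) (γ : ℝ) (hγ : 0 < γ)
    (hD : ∀ d ∈ D, φ d ≤ -γ) : IsClosed (ccone D) := by
  classical
  rw [← isSeqClosed_iff_isClosed]
  intro y x hy hyx
  -- coefficient functions
  choose l hl0 hlsum using hy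
  -- bound on the total mass
  have hmass : ∀ n, ∑ d ∈ D, l n d ≤ -φ (y n) / γ := by
    intro n
    have h1 : φ (y n) ≤ ∑ d ∈ D, l n d * (-γ) := by
      rw [hlsum n, map_sum]
      refine Finset.sum_le_sum fun d hd => ?_
      rw [map_smul, smul_eq_mul]
      exact mul_le_mul_of_nonneg_left (hD d hd) (hl0 n d hd)
    rw [← Finset.sum_mul] at h1
    rw [le_div_iff₀ hγ]
    nlinarith
  have hbdd : BddAbove (Set.range fun n => -φ (y n) / γ) := by
    have : Filter.Tendsto (fun n => -φ (y n) / γ) Filter.atTop (nhds (-φ x / γ)) := by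
      exact ((φ.continuous.tendsto x).comp hyx).neg.div_const γ
    exact this.bddAbove_range
  obtain ⟨B, hB⟩ := hbdd
  have hcoef : ∀ n, ∀ d ∈ D, l n d ∈ Set.Icc (0:ℝ) B := by
    intro n d hd
    refine ⟨hl0 n d hd, ?_⟩
    calc l n d ≤ ∑ d' ∈ D, l n d' :=
          Finset.single_le_sum (fun d' hd' => hl0 n d' hd') hd
      _ ≤ -φ (y n) / γ := hmass n
      _ ≤ B := hB (Set.mem_range_self n)
  -- compactness of the coefficient cube
  set K : Set ({d // d ∈ D} → ℝ) := Set.univ.pi fun _ => Set.Icc (0:ℝ) B with hK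
  have hKcomp : IsCompact K := isCompact_univ_pi fun _ => isCompact_Icc
  have hmemK : ∀ n, (fun d : {d // d ∈ D} => l n d.1) ∈ K := by
    intro n
    intro d _
    exact hcoef n d.1 d.2
  obtain ⟨cinf, hcinfK, σ, hσ, hσlim⟩ := hKcomp.tendsto_subseq hmemK
  -- the summation map is continuous
  set Φ : ({d // d ∈ D} → ℝ) → (X → ℝ) := fun cc => ∑ d ∈ D.attach, cc d • d.1 with hΦ
  have hΦcont : Continuous Φ := by
    refine continuous_finset_sum _ fun d _ => ?_
    exact (continuous_apply d).smul continuous_const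
  have hΦy : ∀ n, Φ (fun d : {d // d ∈ D} => l n d.1) = y n := by
    intro n
    rw [hΦ, hlsum n]
    rw [← Finset.sum_attach D fun d => l n d • d]
  have hlim2 : Filter.Tendsto (fun k => y (σ k)) Filter.atTop (nhds (Φ cinf)) := by
    have h := (hΦcont.tendsto cinf).comp hσlim
    have heq : (Φ ∘ (fun n (d : {d // d ∈ D}) => l n ↑d) ∘ σ) = fun k => y (σ k) := by
      funext k
      exact hΦy (σ k)
    rwa [heq] at h
  have hlim3 : Filter.Tendsto (fun k => y (σ k)) Filter.atTop (nhds x) :=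
    hyx.comp (hσ.tendsto_atTop)
  have hxΦ : x = Φ cinf := tendsto_nhds_unique hlim3 hlim2
  refine ⟨fun v => if h : v ∈ D then cinf ⟨v, h⟩ else 0, ?_, ?_⟩
  · intro d hd
    simp only [dif_pos hd]
    exact (hcinfK ⟨d, hd⟩ (Set.mem_univ _)).1
  · rw [hxΦ, hΦ]
    rw [← Finset.sum_attach D fun d => (if h : d ∈ D then cinf ⟨d, h⟩ else 0) • d]
    exact Finset.sum_congr rfl fun d _ => by rw [dif_pos d.2]

end Closed

section Main

open scoped Pointwise

variable {X : Type*} [Fintype X]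

lemma main_decomp
    (V : Finset (X → ℝ)) (P : Set (X → ℝ)) (hP : P = convexHull ℝ (V : Set (X → ℝ)))
    (c : X → ℝ) (Fstar : Set (X → ℝ))
    (hF : Fstar = {μ | μ ∈ P ∧ ∀ ν ∈ P, linVal c ν ≤ linVal c μ})
    (hFP : Fstar ≠ P)
    (μs0 : X → ℝ) (hμs0 : μs0 ∈ Set.extremePoints ℝ P ∩ Fstar) :
    ∀ x ∈ P, ∃ p ∈ Fstar, ∃ D : Finset (X → ℝ),
      (∀ d ∈ D, ∃ uu ww, uu ∈ Set.extremePoints ℝ P ∩ Fstar ∧ ww ∈ Set.extremePoints ℝ P ∧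
        ww ∉ Fstar ∧ IsExposed ℝ P (segment ℝ uu ww) ∧ d = ww - uu) ∧
      x - p ∈ ccone D := by
  classical
  have hPconv : Convex ℝ P := hP ▸ convex_convexHull ℝ _
  have hPcomp : IsCompact P := hP ▸ V.finite_toSet.isCompact_convexHull (𝕜 := ℝ)
  have hPclosed : IsClosed P := hPcomp.isClosed
  have hcont : Continuous fun μ : X → ℝ => linVal c μ := by
    have h := (linCLM c).continuous
    convert h using 1
    funext μ
    rw [linCLM_apply]
  have hEV : Set.extremePoints ℝ P ⊆ (V : Set (X → ℝ)) := by
    rw [hP]; exact extremePoints_convexHull_subset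
  set Ef : Finset (X → ℝ) := V.filter (fun v => v ∈ Set.extremePoints ℝ P) with hEfdef
  have hEfco : (Ef : Set (X → ℝ)) = Set.extremePoints ℝ P := by
    ext v
    simp only [hEfdef, Finset.coe_filter, Set.mem_setOf_eq]
    exact ⟨fun h => h.2, fun h => ⟨hEV h, h⟩⟩
  have hExAll : ∀ v ∈ Ef, v ∈ Set.extremePoints ℝ P := by
    intro v hv
    rw [← hEfco]
    exact Finset.mem_coe.2 hv
  have hPEf : P = convexHull ℝ (Ef : Set (X → ℝ)) := by
    have hKM := closure_convexHull_extremePoints hPcomp hPconv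
    rw [← hEfco] at hKM
    rw [(Ef.finite_toSet.isClosed_convexHull (𝕜 := ℝ)).closure_eq] at hKM
    exact hKM.symm
  have hFsub : Fstar ⊆ P := by rw [hF]; rintro μ ⟨h, _⟩; exact h
  have hFconv : Convex ℝ Fstar := by
    rw [hF]
    intro p hp q hq a b ha hb hab
    refine ⟨hPconv hp.1 hq.1 ha hb hab, fun ν hν => ?_⟩
    have h1 := hp.2 ν hν
    have h2 := hq.2 ν hν
    have : linVal c (a • p + b • q) = a * linVal c p + b * linVal c q := by
      simp only [← linCLM_apply, map_add, map_smul, smul_eq_mul]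
    rw [this]
    have h4 := mul_le_mul_of_nonneg_left h1 ha
    have h5 := mul_le_mul_of_nonneg_left h2 hb
    have h6 : a * linVal c ν + b * linVal c ν = linVal c ν := by
      rw [← add_mul, hab, one_mul]
    linarith
  have hFclosed : IsClosed Fstar := by
    rw [hF]
    have heq : {μ | μ ∈ P ∧ ∀ ν ∈ P, linVal c ν ≤ linVal c μ} =
        P ∩ ⋂ ν ∈ P, {μ | linVal c ν ≤ linVal c μ} := by
      ext μ; simp [Set.mem_iInter]
    rw [heq]
    refine hPclosed.inter (isClosed_biInter fun ν _ => ?_)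
    exact isClosed_le continuous_const hcont
  have hFcomp : IsCompact Fstar := hPcomp.of_isClosed_subset hFclosed hFsub
  have hExpF : IsExposed ℝ P Fstar := by
    intro _
    refine ⟨linCLM c, ?_⟩
    rw [hF]
    ext μ
    simp only [Set.mem_setOf_eq, linCLM_apply]
  have hFext : Fstar.extremePoints ℝ = Fstar ∩ Set.extremePoints ℝ P :=
    hExpF.isExtreme.extremePoints_eq
  set Ffin : Finset (X → ℝ) := Ef.filter (fun v => v ∈ Fstar) with hFfindef
  have hFfinco : (Ffin : Set (X → ℝ)) = Fstar ∩ Set.extremePoints ℝ P := by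
    ext v
    simp only [hFfindef, Finset.coe_filter, Set.mem_setOf_eq, Set.mem_inter_iff]
    constructor
    · rintro ⟨h1, h2⟩; exact ⟨h2, hExAll v h1⟩
    · rintro ⟨h1, h2⟩
      refine ⟨?_, h1⟩
      rw [← hEfco] at h2
      exact Finset.mem_coe.1 h2
  have hFstarEq : Fstar = convexHull ℝ (Ffin : Set (X → ℝ)) := by
    have hKM := closure_convexHull_extremePoints hFcomp hFconv
    rw [hFext, ← hFfinco] at hKM
    rw [(Ffin.finite_toSet.isClosed_convexHull (𝕜 := ℝ)).closure_eq] at hKM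
    exact hKM.symm
  have hμs0Ffin : μs0 ∈ Ffin := by
    rw [← Finset.mem_coe, hFfinco]
    exact ⟨hμs0.2, hμs0.1⟩
  set Wfin : Finset (X → ℝ) := Ef.filter (fun v => v ∉ Fstar) with hWfindef
  have hWne : Wfin.Nonempty := by
    rw [Finset.filter_nonempty_iff]
    by_contra hcc
    push_neg at hcc
    refine hFP (Set.Subset.antisymm hFsub ?_)
    rw [hPEf]
    refine convexHull_min ?_ hFconv
    intro v hv
    exact hcc v (Finset.mem_coe.1 hv)
  have hcstar : ∀ p ∈ Fstar, ∀ q ∈ Fstar, linVal c p = linVal c q := by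
    intro p hp q hq
    rw [hF] at hp hq
    exact le_antisymm (hq.2 p hp.1) (hp.2 q hq.1)
  have hnotF : ∀ w ∈ Wfin, linVal c w < linVal c μs0 := by
    intro w hw
    rw [hWfindef, Finset.mem_filter] at hw
    have hwP : w ∈ P := hP ▸ subset_convexHull ℝ _ (Finset.mem_coe.2 (Finset.filter_subset _ _ hw.1))
    have hwnF := hw.2
    rw [hF, Set.mem_setOf_eq] at hwnF
    push_neg at hwnF
    obtain ⟨ν, hν, hνlt⟩ := hwnF hwP
    have hμs0F := hμs0.2
    rw [hF] at hμs0F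
    exact lt_of_lt_of_le hνlt (hμs0F.2 ν hν)
  obtain ⟨w0, hw0W, hw0min⟩ :=
    Finset.exists_min_image Wfin (fun w => linVal c μs0 - linVal c w) hWne
  set γ : ℝ := linVal c μs0 - linVal c w0 with hγdef
  have hγ : 0 < γ := sub_pos.2 (hnotF w0 hw0W)
  set Dfin : Finset (X → ℝ) :=
    ((Ffin ×ˢ Wfin).filter (fun q => IsExposed ℝ P (segment ℝ q.1 q.2))).image
      (fun q => q.2 - q.1) with hDfindef
  have hDprop : ∀ d ∈ Dfin, ∃ uu ww, uu ∈ Ffin ∧ ww ∈ Wfin ∧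
      IsExposed ℝ P (segment ℝ uu ww) ∧ d = ww - uu := by
    intro d hd
    rw [hDfindef, Finset.mem_image] at hd
    obtain ⟨q, hq, hqd⟩ := hd
    rw [Finset.mem_filter, Finset.mem_product] at hq
    exact ⟨q.1, q.2, hq.1.1, hq.1.2, hq.2, hqd.symm⟩
  have hDγ : ∀ d ∈ Dfin, linCLM c d ≤ -γ := by
    intro d hd
    obtain ⟨uu, ww, huu, hww, _, rfl⟩ := hDprop d hd
    have huuF : uu ∈ Fstar := (Finset.mem_filter.1 huu).2
    have hval : linVal c uu = linVal c μs0 := hcstar uu huuF μs0 hμs0.2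
    have h1 : linCLM c (ww - uu) = linVal c ww - linVal c uu := by
      rw [map_sub, linCLM_apply, linCLM_apply]
    rw [h1, hval]
    have := hw0min ww hww
    rw [hγdef]
    linarith
  set S : Set (X → ℝ) := Fstar + ccone Dfin with hSdef
  have hSconv : Convex ℝ S := hFconv.add (ccone_convex _)
  have hSclosed : IsClosed S :=
    IsClosed.add_left_of_isCompact (ccone_isClosed Dfin (linCLM c) γ hγ hDγ) hFcomp
  have hFstarS : ∀ p ∈ Fstar, p ∈ S := by
    intro p hp
    have := Set.add_mem_add hp (ccone_zero_mem Dfin)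
    simpa using this
  -- the main claim : P ⊆ S
  have hPS : ∀ x ∈ P, x ∈ S := by
    intro x hx
    by_contra hxS
    obtain ⟨f, r, hfS, hfx⟩ := geometric_hahn_banach_closed_point hSconv hSclosed hxS
    have hfd : ∀ d ∈ Dfin, f d ≤ 0 := by
      intro d hd
      by_contra hpos
      push_neg at hpos
      have hμs0r : f μs0 < r := hfS _ (hFstarS μs0 hμs0.2)
      set t : ℝ := (r - f μs0) / f d + 1 with htdef
      have ht0 : 0 ≤ t := by
        rw [htdef]
        have := div_pos (show (0:ℝ) < r - f μs0 by linarith) hpos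
        linarith
      have hmem : μs0 + t • d ∈ S :=
        Set.add_mem_add hμs0.2 (ccone_smul_mem ht0 (ccone_self_mem hd))
      have hlt := hfS _ hmem
      rw [map_add, map_smul, smul_eq_mul, htdef] at hlt
      rw [add_mul, div_mul_cancel₀ _ hpos.ne', one_mul] at hlt
      linarith
    obtain ⟨u, huFfin, humax⟩ := Finset.exists_max_image Ffin f ⟨μs0, hμs0Ffin⟩
    have huE : u ∈ Set.extremePoints ℝ P :=
      hExAll u (Finset.filter_subset _ _ huFfin)
    have huF : u ∈ Fstar := (Finset.mem_filter.1 huFfin).2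
    have hfmaxF : ∀ w ∈ Ffin, f w ≤ f u := humax
    obtain ⟨G, hGprop, hGdec⟩ := tangentCone Ef P hPEf hExAll u huE
    have hfxu : f (x - u) ≤ 0 := by
      obtain ⟨l, hl, hlx⟩ := hGdec x hx
      rw [hlx, map_sum]
      refine Finset.sum_nonpos fun h hh => ?_
      rw [map_smul, smul_eq_mul]
      obtain ⟨w, hwEf, hwne, hweq, hwexp⟩ := hGprop h hh
      refine mul_nonpos_of_nonneg_of_nonpos (hl h hh) ?_
      by_cases hwF : w ∈ Fstar
      · have hwFfin : w ∈ Ffin := Finset.mem_filter.2 ⟨hwEf, hwF⟩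
        have := hfmaxF w hwFfin
        rw [hweq, map_sub]
        linarith
      · have hwW : w ∈ Wfin := Finset.mem_filter.2 ⟨hwEf, hwF⟩
        have hdD : h ∈ Dfin := by
          rw [hDfindef, Finset.mem_image]
          refine ⟨(u, w), ?_, hweq.symm⟩
          rw [Finset.mem_filter, Finset.mem_product]
          exact ⟨⟨huFfin, hwW⟩, hwexp⟩
        exact hfd h hdD
    have hur : f u < r := hfS _ (hFstarS u huF)
    rw [map_sub] at hfxu
    linarith
  intro x hx
  obtain ⟨p, hp, q, hq, hpq⟩ := Set.mem_add.1 (hPS x hx)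
  refine ⟨p, hp, Dfin, ?_, ?_⟩
  · intro d hd
    obtain ⟨uu, ww, huu, hww, hexp, hdeq⟩ := hDprop d hd
    refine ⟨uu, ww, ⟨hExAll uu (Finset.filter_subset _ _ huu),
      (Finset.mem_filter.1 huu).2⟩,
      hExAll ww (Finset.filter_subset _ _ hww),
      (Finset.mem_filter.1 hww).2, hexp, hdeq⟩
  · rw [show x - p = q by rw [← hpq]; abel]
    exact hq

end Main

theorem stmt3 {X : Type*} [Fintype X]
    -- `P` is a polytope, i.e. the convex hull of a finite set
    (V : Finset (X → ℝ)) (P : Set (X → ℝ)) (hP : P = convexHull ℝ (V : Set (X → ℝ)))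
    (c : X → ℝ)
    -- `Fstar` is the face of maximizers of `μ ↦ cᵀμ` over `P`
    (Fstar : Set (X → ℝ))
    (hF : Fstar = {μ | μ ∈ P ∧ ∀ ν ∈ P, linVal c ν ≤ linVal c μ})
    (hFP : Fstar ≠ P)
    -- an arbitrary semi-norm
    (N : Seminorm ℝ (X → ℝ))
    -- `Δ` is the minimum of the slopes along edges leaving `Fstar`;
    -- by the convention `c/0 := +∞`, pairs with `N (μs - μ) = 0` are discarded
    (Δ : ℝ)
    (hΔ : IsLeast {r : ℝ | ∃ μs ∈ Set.extremePoints ℝ P ∩ Fstar,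
        ∃ μ ∈ Set.extremePoints ℝ P, μ ∉ Fstar ∧
          IsExposed ℝ P (segment ℝ μs μ) ∧ N (μs - μ) ≠ 0 ∧
          r = (linVal c μs - linVal c μ) / N (μs - μ)} Δ) :
    0 < Δ ∧ ∀ μ ∈ P, ∀ μstar ∈ Fstar,
      linVal c μstar - linVal c μ ≥ Δ * sInf ((fun ν => N (ν - μ)) '' Fstar) := by
  obtain ⟨hΔmem, hΔlb⟩ := hΔ
  obtain ⟨μs0, hμs0, μ0, hμ0E, hμ0nF, _, hN0, hr0⟩ := hΔmem
  have hμ0P : μ0 ∈ P := extremePoints_subset hμ0E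
  have hgap0 : 0 < linVal c μs0 - linVal c μ0 := by
    have hμ0nF' := hμ0nF
    rw [hF, Set.mem_setOf_eq] at hμ0nF'
    push_neg at hμ0nF'
    obtain ⟨ν, hν, hνlt⟩ := hμ0nF' hμ0P
    have hμs0F := hμs0.2
    rw [hF] at hμs0F
    have := hμs0F.2 ν hν
    linarith
  have hNpos0 : 0 < N (μs0 - μ0) :=
    lt_of_le_of_ne (apply_nonneg N _) (Ne.symm hN0)
  have hΔpos : 0 < Δ := hr0 ▸ div_pos hgap0 hNpos0
  refine ⟨hΔpos, ?_⟩
  intro μ hμ μstar hμstar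
  obtain ⟨p, hp, D, hDprop, hdec⟩ :=
    main_decomp V P hP c Fstar hF hFP μs0 hμs0 μ hμ
  obtain ⟨l, hl, hldec⟩ := hdec
  -- the common maximal value
  have hcstar : ∀ a ∈ Fstar, ∀ b ∈ Fstar, linVal c a = linVal c b := by
    intro a ha b hb
    rw [hF] at ha hb
    exact le_antisymm (hb.2 a ha.1) (ha.2 b hb.1)
  -- term bounds
  have hterm : ∀ d ∈ D, linCLM c d ≤ -(Δ * N d) := by
    intro d hd
    obtain ⟨uu, ww, huu, hwwE, hwwnF, hexp, rfl⟩ := hDprop d hd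
    have huuF : uu ∈ Fstar := huu.2
    have hwwP : ww ∈ P := extremePoints_subset hwwE
    have hmax : linVal c ww ≤ linVal c uu := by
      have h := huuF
      rw [hF] at h
      exact h.2 ww hwwP
    have hval : linCLM c (ww - uu) = linVal c ww - linVal c uu := by
      rw [map_sub, linCLM_apply, linCLM_apply]
    by_cases hN : N (ww - uu) = 0
    · rw [hval, hN, mul_zero, neg_zero]
      linarith
    · have hNuw : N (uu - ww) = N (ww - uu) := by
        rw [show uu - ww = -(ww - uu) by abel, map_neg_eq_map]
      have hNpos : 0 < N (ww - uu) :=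
        lt_of_le_of_ne (apply_nonneg N _) (Ne.symm hN)
      have hmem : (linVal c uu - linVal c ww) / N (uu - ww) ∈
          {r : ℝ | ∃ μs ∈ Set.extremePoints ℝ P ∩ Fstar,
            ∃ μ ∈ Set.extremePoints ℝ P, μ ∉ Fstar ∧
              IsExposed ℝ P (segment ℝ μs μ) ∧ N (μs - μ) ≠ 0 ∧
              r = (linVal c μs - linVal c μ) / N (μs - μ)} := by
        refine ⟨uu, huu, ww, hwwE, hwwnF, hexp, ?_, rfl⟩
        rw [hNuw]; exact hN
      have hle := hΔlb hmem
      rw [hNuw] at hle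
      rw [le_div_iff₀ hNpos] at hle
      rw [hval]
      linarith
  -- sum up
  have hsum1 : linCLM c (μ - p) = ∑ d ∈ D, l d * linCLM c d := by
    rw [hldec, map_sum]
    exact Finset.sum_congr rfl fun d _ => by rw [map_smul, smul_eq_mul]
  have hsum2 : linCLM c (μ - p) ≤ -(Δ * ∑ d ∈ D, l d * N d) := by
    rw [hsum1, Finset.mul_sum, ← Finset.sum_neg_distrib]
    refine Finset.sum_le_sum fun d hd => ?_
    have h1 := hterm d hd
    have h2 := hl d hd
    calc l d * linCLM c d ≤ l d * (-(Δ * N d)) :=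
          mul_le_mul_of_nonneg_left h1 h2
      _ = -(Δ * (l d * N d)) := by ring
  have hNsum : N (μ - p) ≤ ∑ d ∈ D, l d * N d := by
    rw [hldec]
    refine le_trans (seminorm_sum_le N D fun d => l d • d) ?_
    refine Finset.sum_le_sum fun d hd => ?_
    rw [map_smul_eq_mul]
    rw [Real.norm_of_nonneg (hl d hd)]
  -- the distance to the face
  have hsInf : sInf ((fun ν => N (ν - μ)) '' Fstar) ≤ N (μ - p) := by
    have hmemI : N (p - μ) ∈ (fun ν => N (ν - μ)) '' Fstar := ⟨p, hp, rfl⟩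
    have hbdd : BddBelow ((fun ν => N (ν - μ)) '' Fstar) := by
      refine ⟨0, ?_⟩
      rintro z ⟨ν, _, rfl⟩
      exact apply_nonneg N _
    have h1 := csInf_le hbdd hmemI
    have h2 : N (p - μ) = N (μ - p) := by
      rw [show p - μ = -(μ - p) by abel, map_neg_eq_map]
    rwa [h2] at h1
  have hval2 : linVal c μstar = linVal c p := hcstar μstar hμstar p hp
  have hgapval : linVal c μstar - linVal c μ = -(linCLM c (μ - p)) := by
    rw [map_sub, linCLM_apply, linCLM_apply, hval2]
    ring
  rw [hgapval, ge_iff_le]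
  calc Δ * sInf ((fun ν => N (ν - μ)) '' Fstar) ≤ Δ * N (μ - p) :=
        mul_le_mul_of_nonneg_left hsInf hΔpos.le
    _ ≤ Δ * ∑ d ∈ D, l d * N d := mul_le_mul_of_nonneg_left hNsum hΔpos.le
    _ ≤ -(linCLM c (μ - p)) := by linarith
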